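/- Let K be a field of characteristic zero. Let f, h, c be formal power series in one variable over K such that the constant coefficient of f is 0, the coefficient of degree 1 of f is 0 (i.e., f has order at least 2), and the constant coefficient of h is nonzero. If f · c′ = h · c, where c′ denotes the formal derivative of c, then c = 0. -/

import Mathlib

open PowerSeries

/-- Irregular singularity lemma: let `K` be a field of characteristic zero and
`f, h, c ∈ K⟦X⟧` with `ord f ≥ 2` (the coefficients of degree `0` and `1` of `f`
vanish) and `h(0) ≠ 0`.  If `f · c′ = h · c`, then `c = 0`. -/
theorem eq_zero_of_irregular_singular_ODE {K : Type*} [Field K] [CharZero K]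
    (f h c : PowerSeries K)
    (hf0 : PowerSeries.coeff 0 f = 0) (hf1 : PowerSeries.coeff 1 f = 0)
    (hh : PowerSeries.constantCoeff h ≠ 0)
    (heq : f * (PowerSeries.derivative K c) = h * c) :
    c = 0 := by
  by_contra hc
  have hex : ∃ n, PowerSeries.coeff n c ≠ 0 := by
    by_contra hcon
    push_neg at hcon
    exact hc (PowerSeries.ext fun n => hcon n)
  classical
  set n := Nat.find hex with hn
  have hcn : PowerSeries.coeff n c ≠ 0 := Nat.find_spec hex
  have hmin : ∀ m < n, PowerSeries.coeff m c = 0 := fun m hm => by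
    by_contra hm'
    exact absurd hm (Nat.find_min' hex hm').not_gt
  have hLHS : PowerSeries.coeff n (f * PowerSeries.derivative K c) = 0 := by
    rw [PowerSeries.coeff_mul]
    apply Finset.sum_eq_zero
    rintro ⟨i, j⟩ hij
    simp only [Finset.HasAntidiagonal.mem_antidiagonal] at hij
    rcases Nat.lt_or_ge i 2 with hi | hi
    · interval_cases i
      · simp [hf0]
      · simp [hf1]
    · have : j + 1 < n := by omega
      rw [PowerSeries.coeff_derivative, hmin _ this]
      ring
  have hRHS : PowerSeries.coeff n (h * c) = PowerSeries.coeff 0 h * PowerSeries.coeff n c := by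
    rw [PowerSeries.coeff_mul]
    apply Finset.sum_eq_single (0, n)
    · rintro ⟨i, j⟩ hij hne
      simp only [Finset.HasAntidiagonal.mem_antidiagonal] at hij
      have hjn : j ≠ n := fun hjn => hne (by subst hjn; simp only [Prod.mk.injEq]; exact ⟨by omega, trivial⟩)
      rw [hmin j (by omega), mul_zero]
    · intro habs
      simp [Finset.mem_antidiagonal] at habs
  have heq' := congrArg (PowerSeries.coeff n) heq
  rw [hLHS, hRHS] at heq'
  have h0 : PowerSeries.coeff 0 h ≠ 0 := by
    rwa [PowerSeries.coeff_zero_eq_constantCoeff]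
  exact (mul_ne_zero h0 hcn) heq'.symm
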